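/- The functions H_1, H_2, H_3 pairwise Poisson-commute with respect to the Lie–Poisson structure g^(3): {H_i, H_j} = 0 for all i,j ∈ {1,2,3}, where H_1 = 2⟨b,y⟩, H_2 = ⟨y,y⟩ + 2⟨b,x⟩, H_3 = 2(⟨b,z⟩ + ⟨y,x⟩). -/

import Mathlib

open Matrix

noncomputable section

/-- Phase space of `g^(3)`: triples `(y, x, z)` of vectors in `ℝ³`. -/
abbrev G3 := (Fin 3 → ℝ) × (Fin 3 → ℝ) × (Fin 3 → ℝ)

/-- Gradient with respect to `y`. -/
def gradY (f : G3 → ℝ) (p : G3) : Fin 3 → ℝ :=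
  fun a => fderiv ℝ f p (Pi.single a 1, 0, 0)

/-- Gradient with respect to `x`. -/
def gradX (f : G3 → ℝ) (p : G3) : Fin 3 → ℝ :=
  fun a => fderiv ℝ f p (0, Pi.single a 1, 0)

/-- Gradient with respect to `z`. -/
def gradZ (f : G3 → ℝ) (p : G3) : Fin 3 → ℝ :=
  fun a => fderiv ℝ f p (0, 0, Pi.single a 1)

/-- The Lie–Poisson bracket of `g^(3)`: the extension by the Leibniz rule of
`{y^α,y^β} = ε^{αβ}_γ y^γ`, `{y^α,x^β} = ε^{αβ}_γ x^γ`, `{y^α,z^β} = ε^{αβ}_γ z^γ`,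
`{x^α,x^β} = ε^{αβ}_γ z^γ`, `{x^α,z^β} = {z^α,z^β} = 0`, namely
`{f,g} = ⟨y, ∇_y f ∧ ∇_y g⟩ + ⟨x, ∇_y f ∧ ∇_x g + ∇_x f ∧ ∇_y g⟩
       + ⟨z, ∇_y f ∧ ∇_z g + ∇_z f ∧ ∇_y g⟩ + ⟨z, ∇_x f ∧ ∇_x g⟩`. -/
def pb3 (f g : G3 → ℝ) (p : G3) : ℝ :=
  p.1 ⬝ᵥ ((gradY f p) ⨯₃ (gradY g p))
    + p.2.1 ⬝ᵥ ((gradY f p) ⨯₃ (gradX g p) + (gradX f p) ⨯₃ (gradY g p))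
    + p.2.2 ⬝ᵥ ((gradY f p) ⨯₃ (gradZ g p) + (gradZ f p) ⨯₃ (gradY g p))
    + p.2.2 ⬝ᵥ ((gradX f p) ⨯₃ (gradX g p))

/-- The first integrals `H₁ = 2⟨b,y⟩`, `H₂ = ⟨y,y⟩ + 2⟨b,x⟩`,
`H₃ = 2(⟨b,z⟩ + ⟨y,x⟩)`. -/
def Ham (b : Fin 3 → ℝ) : Fin 3 → G3 → ℝ :=
  ![fun p => 2 * (b ⬝ᵥ p.1),
    fun p => p.1 ⬝ᵥ p.1 + 2 * (b ⬝ᵥ p.2.1),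
    fun p => 2 * (b ⬝ᵥ p.2.2 + p.1 ⬝ᵥ p.2.1)]

/-! ### Auxiliary machinery -/

/-- The linear functional `v ↦ c₁⬝v.1 + c₂⬝v.2.1 + c₃⬝v.2.2` as a continuous linear map. -/
noncomputable def dCLM (c1 c2 c3 : Fin 3 → ℝ) : G3 →L[ℝ] ℝ :=
  (∑ i : Fin 3, c1 i • ((ContinuousLinearMap.proj i).comp (ContinuousLinearMap.fst ℝ _ _)))
  + (∑ i : Fin 3, c2 i • ((ContinuousLinearMap.proj i).comp
      ((ContinuousLinearMap.fst ℝ _ _).comp (ContinuousLinearMap.snd ℝ _ _))))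
  + (∑ i : Fin 3, c3 i • ((ContinuousLinearMap.proj i).comp
      ((ContinuousLinearMap.snd ℝ _ _).comp (ContinuousLinearMap.snd ℝ _ _))))

@[simp] lemma dCLM_apply (c1 c2 c3 : Fin 3 → ℝ) (v : G3) :
    dCLM c1 c2 c3 v = c1 ⬝ᵥ v.1 + c2 ⬝ᵥ v.2.1 + c3 ⬝ᵥ v.2.2 := by
  simp [dCLM, dotProduct, ContinuousLinearMap.sum_apply]

private abbrev Cy (i : Fin 3) : G3 →L[ℝ] ℝ :=
  (ContinuousLinearMap.proj i).comp (ContinuousLinearMap.fst ℝ (Fin 3 → ℝ) ((Fin 3 → ℝ) × (Fin 3 → ℝ)))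

private abbrev Cx (i : Fin 3) : G3 →L[ℝ] ℝ :=
  (ContinuousLinearMap.proj i).comp
    ((ContinuousLinearMap.fst ℝ (Fin 3 → ℝ) (Fin 3 → ℝ)).comp
      (ContinuousLinearMap.snd ℝ (Fin 3 → ℝ) ((Fin 3 → ℝ) × (Fin 3 → ℝ))))

lemma hH1 (b : Fin 3 → ℝ) (p : G3) :
    HasFDerivAt (fun q : G3 => 2 * (b ⬝ᵥ q.1)) (dCLM ((2:ℝ) • b) 0 0) p := by
  have h : (fun q : G3 => 2 * (b ⬝ᵥ q.1)) = fun q => dCLM ((2:ℝ) • b) 0 0 q := by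
    funext q; simp [dotProduct, Fin.sum_univ_three]; ring
  rw [h]; exact (dCLM ((2:ℝ) • b) 0 0).hasFDerivAt

lemma hH2 (b : Fin 3 → ℝ) (p : G3) :
    HasFDerivAt (fun q : G3 => q.1 ⬝ᵥ q.1 + 2 * (b ⬝ᵥ q.2.1)) (dCLM ((2:ℝ) • p.1) ((2:ℝ) • b) 0) p := by
  have h1 : ∀ i : Fin 3, HasFDerivAt (fun q : G3 => q.1 i * q.1 i)
      ((2 * p.1 i) • Cy i) p := by
    intro i
    have hc := (Cy i).hasFDerivAt (x := p)
    exact (hc.mul hc).congr_fderiv (ContinuousLinearMap.ext fun v => by simp; ring)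
  have hs : HasFDerivAt (fun q : G3 => ∑ i : Fin 3, q.1 i * q.1 i)
      (∑ i : Fin 3, (2 * p.1 i) • Cy i) p :=
    HasFDerivAt.fun_sum (fun i _ => h1 i)
  have hlin' : HasFDerivAt (fun q : G3 => 2 * (b ⬝ᵥ q.2.1)) (dCLM 0 ((2:ℝ) • b) 0) p := by
    have h : (fun q : G3 => 2 * (b ⬝ᵥ q.2.1)) = fun q => dCLM 0 ((2:ℝ) • b) 0 q := by
      funext q; simp [dotProduct, Fin.sum_univ_three]; ring
    rw [h]; exact (dCLM 0 ((2:ℝ) • b) 0).hasFDerivAt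
  have hd : (fun q : G3 => q.1 ⬝ᵥ q.1 + 2 * (b ⬝ᵥ q.2.1))
      = fun q : G3 => (∑ i : Fin 3, q.1 i * q.1 i) + 2 * (b ⬝ᵥ q.2.1) := by
    funext q; simp [dotProduct]
  rw [hd]
  exact (hs.add hlin').congr_fderiv (ContinuousLinearMap.ext fun v => by
    simp [dotProduct, ContinuousLinearMap.sum_apply, Fin.sum_univ_three])

lemma hH3 (b : Fin 3 → ℝ) (p : G3) :
    HasFDerivAt (fun q : G3 => 2 * (b ⬝ᵥ q.2.2 + q.1 ⬝ᵥ q.2.1))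
      (dCLM ((2:ℝ) • p.2.1) ((2:ℝ) • p.1) ((2:ℝ) • b)) p := by
  have h1 : ∀ i : Fin 3, HasFDerivAt (fun q : G3 => q.1 i * q.2.1 i)
      (p.2.1 i • Cy i + p.1 i • Cx i) p := by
    intro i
    have hc := (Cy i).hasFDerivAt (x := p)
    have hd := (Cx i).hasFDerivAt (x := p)
    exact (hc.mul hd).congr_fderiv (ContinuousLinearMap.ext fun v => by simp; ring)
  have hs : HasFDerivAt (fun q : G3 => ∑ i : Fin 3, q.1 i * q.2.1 i)
      (∑ i : Fin 3, (p.2.1 i • Cy i + p.1 i • Cx i)) p :=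
    HasFDerivAt.fun_sum (fun i _ => h1 i)
  have hlin' : HasFDerivAt (fun q : G3 => 2 * (b ⬝ᵥ q.2.2)) (dCLM 0 0 ((2:ℝ) • b)) p := by
    have h : (fun q : G3 => 2 * (b ⬝ᵥ q.2.2)) = fun q => dCLM 0 0 ((2:ℝ) • b) q := by
      funext q; simp [dotProduct, Fin.sum_univ_three]; ring
    rw [h]; exact (dCLM 0 0 ((2:ℝ) • b)).hasFDerivAt
  have hd : (fun q : G3 => 2 * (b ⬝ᵥ q.2.2 + q.1 ⬝ᵥ q.2.1))
      = fun q : G3 => 2 * (b ⬝ᵥ q.2.2) + 2 * (∑ i : Fin 3, q.1 i * q.2.1 i) := by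
    funext q; simp [dotProduct]; ring
  rw [hd]
  exact (hlin'.add (hs.const_mul 2)).congr_fderiv (ContinuousLinearMap.ext fun v => by
    simp [dotProduct, ContinuousLinearMap.sum_apply, Fin.sum_univ_three]; ring)

lemma fderiv_H1 (b : Fin 3 → ℝ) (p : G3) :
    fderiv ℝ (Ham b 0) p = dCLM ((2:ℝ) • b) 0 0 := by
  have : Ham b 0 = fun q : G3 => 2 * (b ⬝ᵥ q.1) := by simp [Ham]
  rw [this]; exact (hH1 b p).fderiv

lemma fderiv_H2 (b : Fin 3 → ℝ) (p : G3) :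
    fderiv ℝ (Ham b 1) p = dCLM ((2:ℝ) • p.1) ((2:ℝ) • b) 0 := by
  have : Ham b 1 = fun q : G3 => q.1 ⬝ᵥ q.1 + 2 * (b ⬝ᵥ q.2.1) := by simp [Ham]
  rw [this]; exact (hH2 b p).fderiv

lemma fderiv_H3 (b : Fin 3 → ℝ) (p : G3) :
    fderiv ℝ (Ham b 2) p = dCLM ((2:ℝ) • p.2.1) ((2:ℝ) • p.1) ((2:ℝ) • b) := by
  have : Ham b 2 = fun q : G3 => 2 * (b ⬝ᵥ q.2.2 + q.1 ⬝ᵥ q.2.1) := by simp [Ham]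
  rw [this]; exact (hH3 b p).fderiv

lemma grad_eq {f : G3 → ℝ} {p : G3} {c1 c2 c3 : Fin 3 → ℝ}
    (h : fderiv ℝ f p = dCLM c1 c2 c3) :
    gradY f p = c1 ∧ gradX f p = c2 ∧ gradZ f p = c3 := by
  refine ⟨funext fun a => ?_, funext fun a => ?_, funext fun a => ?_⟩ <;>
    simp [gradY, gradX, gradZ, h, dotProduct_single]

/-- `H₁, H₂, H₃` pairwise Poisson-commute with respect to the Lie–Poisson
structure `g^(3)`. -/
theorem stmt7 (b : Fin 3 → ℝ) (i j : Fin 3) (p : G3) :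
    pb3 (Ham b i) (Ham b j) p = 0 := by
  obtain ⟨y1, x1, z1⟩ := grad_eq (fderiv_H1 b p)
  obtain ⟨y2, x2, z2⟩ := grad_eq (fderiv_H2 b p)
  obtain ⟨y3, x3, z3⟩ := grad_eq (fderiv_H3 b p)
  fin_cases i <;> fin_cases j <;>
    · simp only [pb3, Fin.isValue, Fin.zero_eta, Fin.mk_one, show (⟨2, by norm_num⟩ : Fin 3) = 2 from rfl,
        y1, x1, z1, y2, x2, z2, y3, x3, z3]
      simp only [cross_apply, dotProduct, Fin.sum_univ_three, Pi.add_apply, Pi.smul_apply,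
        Pi.zero_apply, smul_eq_mul, Matrix.cons_val_zero, Matrix.cons_val_one, Matrix.head_cons,
        Matrix.cons_val_two, Matrix.tail_cons]
      ring
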